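/- Let ρ̃ > 0 and let g : 𝕋̄_ρ̃ → ℂ be a 1-periodic function, continuous on the closed strip, holomorphic and bounded on 𝕋_ρ̃. Let N ∈ ℕ, N ≥ 1, and let g̃_k = (1/N) Σ_{j=0}^{N−1} g(j/N) e^{−2πik j/N} be its discrete Fourier coefficients and ĝ_k = ∫₀¹ g(x) e^{−2πikx} dx its Fourier coefficients. Then for every integer k with −N/2 ≤ k ≤ N/2 − 1, one has |g̃_k − ĝ_k| ≤ s_N(k, ρ̃)·‖g‖_ρ̃, where s_N(k, ρ̃) = e^{−2πρ̃N}/(1 − e^{−2πρ̃N}) · (e^{2πρ̃k} + e^{−2πρ̃k}). -/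

import Mathlib

noncomputable section

/-- Open complex strip of half-width `ρ` around the real axis. -/
def stripO (ρ : ℝ) : Set ℂ := {x : ℂ | |x.im| < ρ}

/-- Closed complex strip of half-width `ρ` around the real axis. -/
def stripC (ρ : ℝ) : Set ℂ := {x : ℂ | |x.im| ≤ ρ}

/-- `f` belongs to `Per ρ`: 1-periodic, continuous on the closed strip,
holomorphic on the open strip, real on the reals is not required here. -/
structure IsPerC (ρ : ℝ) (f : ℂ → ℂ) : Prop where
  periodic : ∀ x : ℂ, f (x + 1) = f x
  contOn : ContinuousOn f (stripC ρ)
  diffOn : DifferentiableOn ℂ f (stripO ρ)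

/-- Sup norm on the strip of half-width `ρ`. -/
def perNorm (ρ : ℝ) (f : ℂ → ℂ) : ℝ :=
  sSup ((fun x => ‖f x‖) '' stripO ρ)

/-- `k`-th discrete Fourier coefficient of `g` with `N` sampling nodes `x_j = j/N`. -/
def dftCoeff (N : ℕ) (g : ℂ → ℂ) (k : ℤ) : ℂ :=
  (1 / (N : ℂ)) * ∑ j ∈ Finset.range N,
    g ((j : ℂ) / (N : ℂ)) * Complex.exp ((-2 * (Real.pi : ℂ) * Complex.I * (k : ℂ) * (j : ℂ)) / (N : ℂ))

/-- `k`-th Fourier coefficient of a 1-periodic function `g`. -/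
def fourierCoeffP (g : ℂ → ℂ) (k : ℤ) : ℂ :=
  ∫ t in (0:ℝ)..1, g (t : ℂ) * Complex.exp (-2 * (Real.pi : ℂ) * Complex.I * (k : ℂ) * (t : ℂ))

/-- The constant `s_N(k,ρ̃)` controlling the aliasing error of the `k`-th DFT coefficient. -/
def sN (N : ℕ) (k : ℤ) (ρ : ℝ) : ℝ :=
  Real.exp (-2 * Real.pi * ρ * N) / (1 - Real.exp (-2 * Real.pi * ρ * N)) *
    (Real.exp (2 * Real.pi * ρ * k) + Real.exp (-2 * Real.pi * ρ * k))

open Complex Set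

lemma contour_shift (ρt : ℝ) (hρt : 0 < ρt) (g : ℂ → ℂ) (hg : IsPerC ρt g)
    (n : ℤ) (σ : ℝ) (hσ : |σ| < ρt) :
    fourierCoeffP g n =
      ∫ t in (0:ℝ)..1, g (t + σ * I) *
        Complex.exp (-2 * (Real.pi : ℂ) * I * (n : ℂ) * ((t : ℂ) + σ * I)) := by
  set F : ℂ → ℂ := fun z => g z * Complex.exp (-2 * (Real.pi : ℂ) * I * (n : ℂ) * z) with hF
  have hsub : (Set.uIcc (0:ℝ) 1 ×ℂ Set.uIcc (0:ℝ) σ) ⊆ stripO ρt := by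
    intro z hz
    have h1 : z.im ∈ Set.uIcc (0:ℝ) σ := hz.2
    rw [Set.uIcc_eq_union] at h1
    have habs : |z.im| ≤ |σ| := by
      rcases h1 with h | h
      · rw [_root_.abs_of_nonneg h.1]; exact h.2.trans (le_abs_self σ)
      · rw [_root_.abs_of_nonpos h.2]; exact (neg_le_neg h.1).trans (neg_le_abs σ)
    exact lt_of_le_of_lt habs hσ
  have hdiff : DifferentiableOn ℂ F (Set.uIcc (0:ℝ) 1 ×ℂ Set.uIcc (0:ℝ) σ) :=
    ((hg.diffOn.mono hsub).mul ((differentiable_const _ |>.mul differentiable_id).cexp.differentiableOn))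
  have key := Complex.integral_boundary_rect_eq_zero_of_differentiableOn F 0 (1 + σ * I)
    (by simpa using hdiff)
  simp only [Complex.add_re, Complex.one_re, Complex.mul_re, Complex.mul_im, Complex.ofReal_re,
    Complex.I_re, Complex.ofReal_im, Complex.I_im, Complex.add_im, Complex.one_im, Complex.zero_re,
    Complex.zero_im, mul_zero, mul_one, sub_zero, zero_mul, zero_add, add_zero,
    Complex.ofReal_zero, zero_sub, neg_zero] at key
  have hvert : ∀ y : ℝ, F (((1:ℝ):ℂ) + y * I) = F (y * I) := by
    intro y
    have hg1 : g (((1:ℝ):ℂ) + y * I) = g (y * I) := by rw [Complex.ofReal_one, add_comm]; exact hg.periodic _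
    have he : Complex.exp (-2 * (Real.pi : ℂ) * I * (n : ℂ) * (((1:ℝ):ℂ) + y * I)) =
        Complex.exp (-2 * (Real.pi : ℂ) * I * (n : ℂ) * ((y:ℂ) * I)) := by
      rw [Complex.ofReal_one, mul_add, Complex.exp_add, mul_one]
      have : Complex.exp (-2 * (Real.pi : ℂ) * I * (n : ℂ)) = 1 := by
        rw [show (-2 * (Real.pi : ℂ) * I * (n : ℂ)) = (-n : ℤ) * (2 * (Real.pi:ℂ) * I) by push_cast; ring]
        exact Complex.exp_int_mul_two_pi_mul_I (-n)
      rw [this, one_mul]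
    simp only [hF, hg1, he]
  simp only [hvert] at key
  have : (∫ x : ℝ in (0:ℝ)..1, F x) = ∫ x : ℝ in (0:ℝ)..1, F (x + σ * I) := by
    linear_combination key
  calc fourierCoeffP g n = ∫ x : ℝ in (0:ℝ)..1, F x := rfl
    _ = _ := by rw [this]

lemma perNorm_nonneg (ρt : ℝ) (hρt : 0 < ρt) (g : ℂ → ℂ)
    (hb : BddAbove ((fun x => ‖g x‖) '' stripO ρt)) : 0 ≤ perNorm ρt g := by
  have h0 : (0:ℂ) ∈ stripO ρt := by simp [stripO, hρt]
  exact le_trans (norm_nonneg (g 0)) (le_csSup hb ⟨0, h0, rfl⟩)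

lemma coeff_bound (ρt : ℝ) (hρt : 0 < ρt) (g : ℂ → ℂ) (hg : IsPerC ρt g)
    (hb : BddAbove ((fun x => ‖g x‖) '' stripO ρt)) (n : ℤ) :
    ‖fourierCoeffP g n‖ ≤ Real.exp (-(2*Real.pi*ρt) * |(n:ℝ)|) * perNorm ρt g := by
  set M := perNorm ρt g with hM
  have hmem : ∀ x ∈ stripO ρt, ‖g x‖ ≤ M := fun x hx => le_csSup hb ⟨x, hx, rfl⟩
  have hstep : ∀ σ ∈ Set.Ioo 0 ρt,
      ‖fourierCoeffP g n‖ ≤ Real.exp (-(2*Real.pi*σ) * |(n:ℝ)|) * M := by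
    intro σ hσ
    set σ' : ℝ := if 0 ≤ n then -σ else σ with hσ'
    have habsσ' : |σ'| < ρt := by
      rw [hσ']; split <;> simp [abs_of_pos hσ.1, abs_of_neg (neg_neg_iff_pos.mpr hσ.1), hσ.2]
    have hshift := contour_shift ρt hρt g hg n σ' habsσ'
    rw [hshift]
    have hbound : ∀ t ∈ Set.uIoc (0:ℝ) 1,
        ‖g (t + σ' * I) * Complex.exp (-2 * (Real.pi : ℂ) * I * (n : ℂ) * ((t : ℂ) + σ' * I))‖
          ≤ Real.exp (-(2*Real.pi*σ) * |(n:ℝ)|) * M := by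
      intro t _
      have h1 : ‖g (t + σ' * I)‖ ≤ M := by
        apply hmem
        simp only [stripO, Set.mem_setOf_eq, Complex.add_im, Complex.ofReal_im,
          Complex.mul_im, Complex.ofReal_re, Complex.I_im, Complex.I_re]
        simpa using habsσ'
      have h2 : ‖Complex.exp (-2 * (Real.pi : ℂ) * I * (n : ℂ) * ((t : ℂ) + σ' * I))‖
          = Real.exp (2 * Real.pi * n * σ') := by
        have : -2 * (Real.pi : ℂ) * I * (n : ℂ) * ((t : ℂ) + σ' * I)
            = ((2 * Real.pi * n * σ' : ℝ) : ℂ) + ((-2 * Real.pi * n * t : ℝ) : ℂ) * I := by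
          push_cast; ring_nf; rw [Complex.I_sq]; ring
        rw [this, Complex.norm_exp]; norm_num
      have h3 : (2 : ℝ) * Real.pi * n * σ' = -(2*Real.pi*σ) * |(n:ℝ)| := by
        rw [hσ']
        rcases le_or_gt 0 n with h | h
        · rw [if_pos h, _root_.abs_of_nonneg (by exact_mod_cast h : (0:ℝ) ≤ (n:ℝ))]; ring
        · rw [if_neg (not_le.mpr h), _root_.abs_of_neg (by exact_mod_cast h : (n:ℝ) < 0)]; ring
      calc ‖g (t + σ' * I) * Complex.exp (-2 * (Real.pi : ℂ) * I * (n : ℂ) * ((t : ℂ) + σ' * I))‖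
          = ‖g (t + σ' * I)‖ * Real.exp (2 * Real.pi * n * σ') := by
            rw [norm_mul, h2]
        _ ≤ M * Real.exp (2 * Real.pi * n * σ') := by
            exact mul_le_mul_of_nonneg_right h1 (Real.exp_nonneg _)
        _ = Real.exp (-(2*Real.pi*σ) * |(n:ℝ)|) * M := by rw [h3, mul_comm]
    have := intervalIntegral.norm_integral_le_of_norm_le_const hbound
    simpa using this
  have hcont : Filter.Tendsto (fun σ : ℝ => Real.exp (-(2*Real.pi*σ) * |(n:ℝ)|) * M)
      (nhdsWithin ρt (Set.Iio ρt)) (nhds (Real.exp (-(2*Real.pi*ρt) * |(n:ℝ)|) * M)) := by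
    apply Filter.Tendsto.mono_left _ nhdsWithin_le_nhds
    exact ((Real.continuous_exp.comp (by continuity)).mul continuous_const).tendsto ρt
  refine ge_of_tendsto hcont ?_
  filter_upwards [Ioo_mem_nhdsLT_of_mem (⟨hρt, le_refl ρt⟩ : ρt ∈ Set.Ioc 0 ρt)] with σ hσ
  exact hstep σ hσ

lemma summable_exp_abs (a : ℝ) (ha : 0 < a) (M : ℝ) :
    Summable (fun n : ℤ => Real.exp (-a * |(n:ℝ)|) * M) := by
  have hq : Real.exp (-a) < 1 := Real.exp_lt_one_iff.mpr (by linarith)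
  have hq0 : 0 ≤ Real.exp (-a) := Real.exp_nonneg _
  have key : ∀ n : ℤ, Real.exp (-a * |(n:ℝ)|) = Real.exp (-a) ^ n.natAbs := by
    intro n
    rw [← Real.exp_nat_mul]
    congr 1
    rw [show |(n:ℝ)| = (n.natAbs : ℝ) by rw [Nat.cast_natAbs, Int.cast_abs]]
    ring
  simp_rw [key]
  apply Summable.mul_right
  apply Summable.of_nat_of_neg_add_one
  · simpa using summable_geometric_of_lt_one hq0 hq
  · simp only [Int.natAbs_neg]
    have : ∀ n : ℕ, Real.exp (-a) ^ ((n:ℤ) + 1).natAbs = Real.exp (-a) * Real.exp (-a) ^ n := by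
      intro n
      rw [show ((n:ℤ)+1).natAbs = n + 1 by omega, pow_succ]
      ring
    simp_rw [this]
    exact (summable_geometric_of_lt_one hq0 hq).mul_left _

lemma fourier_hasSum (ρt : ℝ) (hρt : 0 < ρt) (g : ℂ → ℂ) (hg : IsPerC ρt g)
    (hb : BddAbove ((fun x => ‖g x‖) '' stripO ρt)) (t : ℝ) :
    HasSum (fun n : ℤ => fourierCoeffP g n * Complex.exp (2 * (Real.pi:ℂ) * I * (n:ℂ) * (t:ℂ)))
      (g (t:ℂ)) := by
  haveI : Fact (0 < (1:ℝ)) := ⟨one_pos⟩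
  have hper : Function.Periodic (fun s : ℝ => g (s:ℂ)) 1 := by
    intro s
    simp only [Complex.ofReal_add, Complex.ofReal_one]
    exact hg.periodic _
  have hcont : Continuous (fun s : ℝ => g (s:ℂ)) := by
    apply hg.contOn.comp_continuous Complex.continuous_ofReal
    intro s
    simp [stripC, hρt.le]
  have hliftcont : Continuous hper.lift := continuous_coinduced_dom.mpr hcont
  set f : C(AddCircle (1:ℝ), ℂ) := ⟨hper.lift, hliftcont⟩ with hf
  have hcoeff : ∀ n : ℤ, fourierCoeff (f : AddCircle (1:ℝ) → ℂ) n = fourierCoeffP g n := by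
    intro n
    rw [fourierCoeff_eq_intervalIntegral _ n 0]
    simp only [one_smul, one_div, zero_add]
    rw [fourierCoeffP]
    rw [show (1:ℝ)⁻¹ = 1 by norm_num, one_smul]
    apply intervalIntegral.integral_congr
    intro x _
    have h1 : (f : AddCircle (1:ℝ) → ℂ) (x : AddCircle (1:ℝ)) = g (x:ℂ) := by
      simp [hf, Function.Periodic.lift_coe]
    have h2 : (fourier (-n) (x : AddCircle (1:ℝ)) : ℂ)
        = Complex.exp (-2 * (Real.pi:ℂ) * I * (n:ℂ) * (x:ℂ)) := by
      rw [fourier_coe_apply]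
      congr 1
      push_cast
      field_simp
    show (fourier (-n) (x : AddCircle (1:ℝ)) : ℂ) • (f : AddCircle (1:ℝ) → ℂ) (x : AddCircle (1:ℝ))
        = g (x:ℂ) * Complex.exp (-2 * (Real.pi:ℂ) * I * (n:ℂ) * (x:ℂ))
    rw [smul_eq_mul, h1, h2, mul_comm]
  have hsummable : Summable (fourierCoeff (f : AddCircle (1:ℝ) → ℂ)) := by
    apply Summable.of_norm
    simp_rw [hcoeff]
    apply Summable.of_nonneg_of_le (fun n => norm_nonneg _)
      (fun n => coeff_bound ρt hρt g hg hb n)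
    exact summable_exp_abs (2 * Real.pi * ρt)
      (by positivity) (perNorm ρt g)
  have := has_pointwise_sum_fourier_series_of_summable hsummable (t : AddCircle (1:ℝ))
  have hft : (f : AddCircle (1:ℝ) → ℂ) (t : AddCircle (1:ℝ)) = g (t:ℂ) := by
    simp [hf, Function.Periodic.lift_coe]
  rw [hft] at this
  convert this using 2 with n
  rw [hcoeff, smul_eq_mul]
  congr 1
  rw [fourier_coe_apply]
  congr 1
  push_cast
  field_simp

lemma geom_dft (N : ℕ) (hN : 1 ≤ N) (d : ℤ) :
    (1 / (N:ℂ)) * ∑ j ∈ Finset.range N,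
        Complex.exp (2 * (Real.pi:ℂ) * I * (d:ℂ) * (j:ℂ) / (N:ℂ))
      = if (N:ℤ) ∣ d then 1 else 0 := by
  have hNne : (N:ℂ) ≠ 0 := Nat.cast_ne_zero.mpr (by omega)
  set ω : ℂ := Complex.exp (2 * (Real.pi:ℂ) * I * (d:ℂ) / (N:ℂ)) with hω
  have hterm : ∀ j : ℕ, Complex.exp (2 * (Real.pi:ℂ) * I * (d:ℂ) * (j:ℂ) / (N:ℂ)) = ω ^ j := by
    intro j
    rw [hω, ← Complex.exp_nat_mul]
    congr 1
    ring
  simp_rw [hterm]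
  have hωN : ω ^ N = 1 := by
    rw [hω, ← Complex.exp_nat_mul]
    rw [show (N:ℂ) * (2 * (Real.pi:ℂ) * I * (d:ℂ) / (N:ℂ)) = (d:ℂ) * (2 * (Real.pi:ℂ) * I) by
      field_simp]
    exact Complex.exp_int_mul_two_pi_mul_I d
  by_cases hdvd : (N:ℤ) ∣ d
  · rw [if_pos hdvd]
    obtain ⟨m, hm⟩ := hdvd
    have hω1 : ω = 1 := by
      rw [hω, show (2 * (Real.pi:ℂ) * I * (d:ℂ) / (N:ℂ)) = (m:ℂ) * (2 * (Real.pi:ℂ) * I) by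
        rw [show ((d:ℂ)) = ((N:ℤ):ℂ) * (m:ℂ) by exact_mod_cast congrArg (Int.cast : ℤ → ℂ) hm]
        push_cast
        field_simp]
      exact Complex.exp_int_mul_two_pi_mul_I m
    simp [hω1, Finset.sum_const, hNne]
  · have hωne : ω ≠ 1 := by
      intro h
      rw [hω, Complex.exp_eq_one_iff] at h
      obtain ⟨m, hm⟩ := h
      apply hdvd
      refine ⟨m, ?_⟩
      have h2πI : (2 * (Real.pi:ℂ) * I) ≠ 0 := by
        simp [Complex.I_ne_zero, Real.pi_ne_zero, two_ne_zero]
      have hc : (d:ℂ) = (m:ℂ) * (N:ℂ) := by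
        field_simp at hm
        apply mul_left_cancel₀ h2πI
        linear_combination (2 * (Real.pi:ℂ) * I) * hm
      have hz : d = m * N := by exact_mod_cast hc
      rw [hz, mul_comm]
    rw [if_neg hdvd, geom_sum_eq hωne, hωN]
    simp

/-- Control of the error between the discrete Fourier coefficients and the exact Fourier
coefficients of a bounded analytic periodic function: `|g̃_k − ĝ_k| ≤ s_N(k,ρ̃)‖g‖_ρ̃`
for `−N/2 ≤ k ≤ N/2 − 1`. -/
theorem dft_coeff_error (ρt : ℝ) (hρt : 0 < ρt) (g : ℂ → ℂ) (hg : IsPerC ρt g)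
    (hb : BddAbove ((fun x => ‖g x‖) '' stripO ρt))
    (N : ℕ) (hN : 1 ≤ N) (k : ℤ) (hk1 : -(N : ℤ) ≤ 2 * k) (hk2 : 2 * k ≤ (N : ℤ) - 2) :
    ‖dftCoeff N g k - fourierCoeffP g k‖ ≤ sN N k ρt * perNorm ρt g := by
  classical
  set M := perNorm ρt g with hMdef
  have hM0 : 0 ≤ M := perNorm_nonneg ρt hρt g hb
  set c : ℤ → ℂ := fourierCoeffP g with hcdef
  have hNne : (N:ℂ) ≠ 0 := Nat.cast_ne_zero.mpr (by omega)
  -- Step 1 : aliasing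
  have hterm : ∀ j ∈ Finset.range N, HasSum
      (fun n : ℤ => c n * Complex.exp (2*(Real.pi:ℂ)*I*(n:ℂ)*((((j:ℝ)/(N:ℝ)):ℝ):ℂ))
        * Complex.exp ((-2*(Real.pi:ℂ)*I*(k:ℂ)*(j:ℂ))/(N:ℂ)))
      (g ((((j:ℝ)/(N:ℝ)):ℝ):ℂ) * Complex.exp ((-2*(Real.pi:ℂ)*I*(k:ℂ)*(j:ℂ))/(N:ℂ))) :=
    fun j _ => (fourier_hasSum ρt hρt g hg hb _).mul_right _
  have h1 : HasSum
      (fun n : ℤ => (1/(N:ℂ)) * ∑ j ∈ Finset.range N,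
        c n * Complex.exp (2*(Real.pi:ℂ)*I*(n:ℂ)*((((j:ℝ)/(N:ℝ)):ℝ):ℂ))
          * Complex.exp ((-2*(Real.pi:ℂ)*I*(k:ℂ)*(j:ℂ))/(N:ℂ)))
      (dftCoeff N g k) := by
    have h := (hasSum_sum hterm).mul_left (1/(N:ℂ))
    have hval : dftCoeff N g k = (1/(N:ℂ)) * ∑ j ∈ Finset.range N,
        g ((((j:ℝ)/(N:ℝ)):ℝ):ℂ) * Complex.exp ((-2*(Real.pi:ℂ)*I*(k:ℂ)*(j:ℂ))/(N:ℂ)) := by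
      rw [dftCoeff]
      congr 1
      apply Finset.sum_congr rfl
      intro j _
      push_cast
      ring_nf
    rw [hval]
    exact h
  have hptwise : ∀ n : ℤ, ((1/(N:ℂ)) * ∑ j ∈ Finset.range N,
        c n * Complex.exp (2*(Real.pi:ℂ)*I*(n:ℂ)*((((j:ℝ)/(N:ℝ)):ℝ):ℂ))
          * Complex.exp ((-2*(Real.pi:ℂ)*I*(k:ℂ)*(j:ℂ))/(N:ℂ)))
      = if (N:ℤ) ∣ (n - k) then c n else 0 := by
    intro n
    have hsumeq : (∑ j ∈ Finset.range N,
        c n * Complex.exp (2*(Real.pi:ℂ)*I*(n:ℂ)*((((j:ℝ)/(N:ℝ)):ℝ):ℂ))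
          * Complex.exp ((-2*(Real.pi:ℂ)*I*(k:ℂ)*(j:ℂ))/(N:ℂ)))
        = c n * ∑ j ∈ Finset.range N,
            Complex.exp (2*(Real.pi:ℂ)*I*((n - k : ℤ):ℂ)*(j:ℂ)/(N:ℂ)) := by
      rw [Finset.mul_sum]
      apply Finset.sum_congr rfl
      intro j _
      rw [mul_assoc, ← Complex.exp_add]
      congr 2
      push_cast
      field_simp
      ring
    rw [hsumeq, mul_left_comm, geom_dft N hN (n - k)]
    split <;> simp
  have h2 : HasSum (fun n : ℤ => if (N:ℤ) ∣ (n - k) then c n else 0) (dftCoeff N g k) := by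
    exact (funext hptwise : _) ▸ h1
  have hNZne : ((N:ℤ)) ≠ 0 := by omega
  have hinj : Function.Injective (fun m : ℤ => k + m * N) := by
    intro a b hab
    simp only at hab
    have : a * (N:ℤ) = b * N := by omega
    exact mul_right_cancel₀ hNZne this
  have hesupp : ∀ x : ℤ, x ∉ Set.range (fun m : ℤ => k + m * N) →
      (if (N:ℤ) ∣ (x - k) then c x else 0) = 0 := by
    intro x hx
    rw [if_neg]
    rintro ⟨m, hm⟩
    exact hx ⟨m, by linear_combination -hm⟩
  have h3 : HasSum (fun m : ℤ => c (k + m * N)) (dftCoeff N g k) := by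
    have h := (Function.Injective.hasSum_iff hinj hesupp).mpr h2
    have heq : (fun m : ℤ => (if (N:ℤ) ∣ ((k + m * N) - k) then c (k + m * N) else 0))
        = fun m : ℤ => c (k + m * N) := by
      funext m
      rw [if_pos ⟨m, by ring⟩]
    exact heq ▸ h
  have h4 : HasSum (fun m : ℤ => c (k + m * N) - if m = 0 then c k else 0)
      (dftCoeff N g k - c k) := by
    have h0 : HasSum (fun m : ℤ => if m = 0 then c k else 0) (c k) := hasSum_ite_eq 0 (c k)
    exact h3.sub h0
  -- final bound
  set q := Real.exp (-2*Real.pi*ρt*(N:ℝ)) with hqdef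
  have hq0 : 0 < q := Real.exp_pos _
  have hNpos : (0:ℝ) < N := by exact_mod_cast (by omega : 0 < N)
  have hq1 : q < 1 := by
    rw [hqdef]
    apply Real.exp_lt_one_iff.mpr
    have hpp : (0:ℝ) < 2 * Real.pi * ρt * N := by positivity
    linarith
  have h1q : (0:ℝ) < 1 - q := by linarith
  set C₁ := Real.exp (-2*Real.pi*ρt*(k:ℝ)) * M with hC₁
  set C₂ := Real.exp (2*Real.pi*ρt*(k:ℝ)) * M with hC₂
  set b : ℤ → ℝ := fun m => if m = 0 then 0
    else Real.exp (-(2*Real.pi*ρt) * |((k + m*N : ℤ):ℝ)|) * M with hbdef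
  have hbound : ∀ m : ℤ, ‖c (k + m * N) - if m = 0 then c k else 0‖ ≤ b m := by
    intro m
    by_cases hm : m = 0
    · subst hm
      simp [hbdef]
    · rw [hbdef]
      simp only [if_neg hm, sub_zero]
      exact coeff_bound ρt hρt g hg hb (k + m * N)
  have hNen : (1:ℤ) ≤ (N:ℤ) := by omega
  have hnat : ∀ n : ℕ, b (n:ℤ) = C₁ * q ^ n - (if n = 0 then C₁ else 0) := by
    intro n
    by_cases hn : n = 0
    · subst hn; simp [hbdef]
    · have hn1 : (1:ℤ) ≤ (n:ℤ) := by omega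
      have hA : (0:ℤ) ≤ ((n:ℤ) - 1) * N := mul_nonneg (by omega) (by omega)
      have hA' : ((n:ℤ) - 1) * N = (n:ℤ)*N - N := by ring
      have hpos : (0:ℤ) ≤ k + (n:ℤ) * N := by
        rw [hA'] at hA; linarith
      rw [hbdef]
      simp only [if_neg (by exact_mod_cast hn : (n:ℤ) ≠ 0), if_neg hn, sub_zero]
      rw [_root_.abs_of_nonneg (by exact_mod_cast hpos : (0:ℝ) ≤ ((k + (n:ℤ)*N : ℤ):ℝ))]
      rw [show (-(2*Real.pi*ρt) * ((k + (n:ℤ)*N : ℤ):ℝ))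
          = -2*Real.pi*ρt*(k:ℝ) + (n:ℕ) * (-2*Real.pi*ρt*(N:ℝ)) by push_cast; ring]
      rw [Real.exp_add, Real.exp_nat_mul, hC₁, hqdef]
      ring
  have hneg : ∀ n : ℕ, b (-((n:ℤ)+1)) = (C₂ * q) * q ^ n := by
    intro n
    have hn0 : (0:ℤ) ≤ (n:ℤ) := by omega
    have hA : (0:ℤ) ≤ (n:ℤ) * N := mul_nonneg (by omega) (by omega)
    have hnegv : k + (-((n:ℤ)+1)) * N ≤ 0 := by
      have : k + (-((n:ℤ)+1)) * N = k - N - (n:ℤ)*N := by ring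
      rw [this]; linarith
    rw [hbdef]
    simp only [if_neg (by omega : ¬(-((n:ℤ)+1) = 0))]
    rw [_root_.abs_of_nonpos (by exact_mod_cast hnegv : ((k + (-((n:ℤ)+1))*N : ℤ):ℝ) ≤ 0)]
    rw [show (-(2*Real.pi*ρt) * (-((k + (-((n:ℤ)+1))*N : ℤ):ℝ)))
        = 2*Real.pi*ρt*(k:ℝ) + (-2*Real.pi*ρt*(N:ℝ)) + (n:ℕ) * (-2*Real.pi*ρt*(N:ℝ)) by
        push_cast; ring]
    rw [Real.exp_add, Real.exp_add, Real.exp_nat_mul, hC₂, hqdef]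
    ring
  have hsum1 : HasSum (fun n : ℕ => b (n:ℤ)) (C₁ * (1-q)⁻¹ - C₁) := by
    have hgeo := (hasSum_geometric_of_lt_one hq0.le hq1).mul_left C₁
    have h := hgeo.sub (hasSum_ite_eq 0 C₁)
    simpa only [← hnat] using h
  have hsum2 : HasSum (fun n : ℕ => b (-((n:ℤ)+1))) ((C₂ * q) * (1-q)⁻¹) := by
    have hgeo := (hasSum_geometric_of_lt_one hq0.le hq1).mul_left (C₂ * q)
    simpa only [← hneg] using hgeo
  have hbsum : HasSum b ((C₁ * (1-q)⁻¹ - C₁) + (C₂ * q) * (1-q)⁻¹) :=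
    HasSum.of_nat_of_neg_add_one hsum1 hsum2
  have hval : (C₁ * (1-q)⁻¹ - C₁) + (C₂ * q) * (1-q)⁻¹ = sN N k ρt * M := by
    have hne : (1:ℝ) - q ≠ 0 := ne_of_gt h1q
    have hkey : C₁ * (1-q)⁻¹ - C₁ = C₁ * q * (1-q)⁻¹ := by
      field_simp
      ring
    rw [hkey, sN, hC₁, hC₂, hqdef]
    ring
  rw [hval] at hbsum
  have hsummable_norm : Summable (fun m : ℤ => ‖c (k + m * N) - if m = 0 then c k else 0‖) :=
    Summable.of_nonneg_of_le (fun _ => norm_nonneg _) hbound hbsum.summable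
  have hfinal : ‖dftCoeff N g k - c k‖ ≤ sN N k ρt * M := by
    rw [← h4.tsum_eq]
    calc ‖∑' m : ℤ, (c (k + m * N) - if m = 0 then c k else 0)‖
        ≤ ∑' m : ℤ, ‖c (k + m * N) - if m = 0 then c k else 0‖ :=
          norm_tsum_le_tsum_norm hsummable_norm
      _ ≤ ∑' m : ℤ, b m := Summable.tsum_le_tsum hbound hsummable_norm hbsum.summable
      _ = sN N k ρt * M := hbsum.tsum_eq
  exact hfinal
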